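/- Let G be an ordered abelian group, H a non-trivial ordered abelian group, and suppose the natural embedding G ⪯ G ⊕ H (lexicographic sum, H infinitesimal) is elementary. If G ≡ G ⊕ H and H' ≡ H, then also G is elementarily embedded in G ⊕ H' (respectively G ≡ G ⊕ H'). -/

import Mathlib

open FirstOrder Language

universe u v

/-- Function symbols of the language of ordered abelian groups: a constant `0` and a binary `+`. -/
def oagFunctions : ℕ → Type
  | 0 => Unit
  | 2 => Unit
  | _ => Empty

/-- Relation symbols of the language of ordered abelian groups: a binary `<`. -/
def oagRelations : ℕ → Type
  | 2 => Unit
  | _ => Empty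

/-- The first-order language `{+, 0, <}` of ordered abelian groups. -/
def oagLang : FirstOrder.Language := ⟨oagFunctions, oagRelations⟩

/-- Any additive group with an order is naturally an `oagLang`-structure. -/
instance oagStructure (M : Type*) [AddCommGroup M] [LT M] : oagLang.Structure M where
  funMap := fun {n} f x =>
    match n, f, x with
    | 0, _, _ => 0
    | 1, f, _ => f.elim
    | 2, _, x => x 0 + x 1
    | (_ + 3), f, _ => f.elim
  RelMap := fun {n} r x =>
    match n, r, x with
    | 0, r, _ => r.elim
    | 1, r, _ => r.elim
    | 2, _, x => x 0 < x 1
    | (_ + 3), r, _ => r.elim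

/-- The lexicographic product of two additive groups is an additive group. -/
instance lexAddCommGroup (G H : Type*) [AddCommGroup G] [AddCommGroup H] :
    AddCommGroup (G ×ₗ H) :=
  inferInstanceAs (AddCommGroup (G × H))

/-- `f : M → N` is an elementary inclusion: it preserves and reflects all first-order
formulas of the language `L`. -/
def IsElemInclusion (L : FirstOrder.Language) (M : Type*) (N : Type*) [L.Structure M]
    [L.Structure N] (f : M → N) : Prop :=
  ∀ (n : ℕ) (φ : L.Formula (Fin n)) (v : Fin n → M),
    φ.Realize (f ∘ v) ↔ φ.Realize v

lemma term_lex {A B : Type*} [AddCommGroup A] [LinearOrder A] [AddCommGroup B] [LinearOrder B]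
    {α : Type*} (t : oagLang.Term α) (vA : α → A) (vB : α → B) :
    Term.realize (M := A ×ₗ B) (fun i => toLex (vA i, vB i)) t =
      toLex (t.realize vA, t.realize vB) := by
  induction t with
  | var v => rfl
  | @func l f ts ih =>
    match l, f with
    | 0, f => rfl
    | 1, f => exact Empty.elim f
    | 2, f =>
      show (Term.realize _ (ts 0) + Term.realize _ (ts 1) : A ×ₗ B) = _
      rw [ih 0, ih 1]
      rfl
    | (n+3), f => exact Empty.elim f

def negDNF {L : FirstOrder.Language} {α : Type*} {k : ℕ} :
    List (L.BoundedFormula α k × L.BoundedFormula α k) →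
      List (L.BoundedFormula α k × L.BoundedFormula α k)
  | [] => [(⊤, ⊤)]
  | p :: l =>
      (negDNF l).map (fun q => (p.1.not ⊓ q.1, q.2)) ++
        (negDNF l).map (fun q => (q.1, p.2.not ⊓ q.2))

lemma negDNF_spec {L : FirstOrder.Language} {α : Type*} {k : ℕ} {M N : Type*}
    [L.Structure M] [L.Structure N]
    (l : List (L.BoundedFormula α k × L.BoundedFormula α k))
    (vA : α → M) (vB : α → N) (xA : Fin k → M) (xB : Fin k → N) :
    (∃ q ∈ negDNF l, q.1.Realize vA xA ∧ q.2.Realize vB xB) ↔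
      ¬ ∃ p ∈ l, p.1.Realize vA xA ∧ p.2.Realize vB xB := by
  induction l with
  | nil =>
    simp [negDNF]
  | cons p l ih =>
    constructor
    · rintro ⟨q, hq, h1, h2⟩ ⟨r, hr, g1, g2⟩
      rcases List.mem_append.1 hq with h | h
      · obtain ⟨q', hq', rfl⟩ := List.mem_map.1 h
        rcases List.mem_cons.1 hr with rfl | hr'
        · exact (BoundedFormula.realize_not.1 (BoundedFormula.realize_inf.1 h1).1) g1
        · exact ih.1 ⟨q', hq', (BoundedFormula.realize_inf.1 h1).2, h2⟩ ⟨r, hr', g1, g2⟩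
      · obtain ⟨q', hq', rfl⟩ := List.mem_map.1 h
        rcases List.mem_cons.1 hr with rfl | hr'
        · exact (BoundedFormula.realize_not.1 (BoundedFormula.realize_inf.1 h2).1) g2
        · exact ih.1 ⟨q', hq', h1, (BoundedFormula.realize_inf.1 h2).2⟩ ⟨r, hr', g1, g2⟩
    · intro h
      have hl : ¬ ∃ r ∈ l, r.1.Realize vA xA ∧ r.2.Realize vB xB :=
        fun ⟨r, hr, hg⟩ => h ⟨r, List.mem_cons_of_mem _ hr, hg⟩
      obtain ⟨q, hq, h1, h2⟩ := ih.2 hl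
      have hp : ¬ (p.1.Realize vA xA ∧ p.2.Realize vB xB) :=
        fun hc => h ⟨p, List.mem_cons_self, hc⟩
      rcases not_and_or.1 hp with h' | h'
      · exact ⟨(p.1.not ⊓ q.1, q.2),
          List.mem_append.2 (Or.inl (List.mem_map.2 ⟨q, hq, rfl⟩)),
          BoundedFormula.realize_inf.2 ⟨BoundedFormula.realize_not.2 h', h1⟩, h2⟩
      · exact ⟨(q.1, p.2.not ⊓ q.2),
          List.mem_append.2 (Or.inr (List.mem_map.2 ⟨q, hq, rfl⟩)),
          h1, BoundedFormula.realize_inf.2 ⟨BoundedFormula.realize_not.2 h', h2⟩⟩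

lemma main_decomp {α : Type*} {k : ℕ} (φ : oagLang.BoundedFormula α k) :
    ∃ L : List (oagLang.BoundedFormula α k × oagLang.BoundedFormula α k),
      ∀ (A B : Type u) [AddCommGroup A] [LinearOrder A] [AddCommGroup B] [LinearOrder B]
        (vA : α → A) (vB : α → B) (xA : Fin k → A) (xB : Fin k → B),
        (BoundedFormula.Realize (M := A ×ₗ B) φ (fun i => toLex (vA i, vB i))
            (fun i => toLex (xA i, xB i)) ↔
          ∃ p ∈ L, p.1.Realize vA xA ∧ p.2.Realize vB xB) := by
  induction φ with
  | falsum =>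
    refine ⟨[], ?_⟩
    intro A B _ _ _ _ vA vB xA xB
    simp [BoundedFormula.Realize]
  | equal t₁ t₂ =>
    refine ⟨[(BoundedFormula.equal t₁ t₂, BoundedFormula.equal t₁ t₂)], ?_⟩
    intro A B _ _ _ _ vA vB xA xB
    have e : (Sum.elim (fun i => toLex (vA i, vB i)) (fun i => toLex (xA i, xB i)) :
        _ → A ×ₗ B) = fun j => toLex (Sum.elim vA xA j, Sum.elim vB xB j) := by
      funext j; cases j <;> rfl
    show (Term.realize _ t₁ = Term.realize _ t₂) ↔ _
    rw [e, term_lex, term_lex]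
    constructor
    · intro h
      have h' := toLex.injective h
      exact ⟨_, List.mem_singleton_self _,
        congrArg Prod.fst h', congrArg Prod.snd h'⟩
    · rintro ⟨p, hp, h1, h2⟩
      rcases List.mem_singleton.1 hp with rfl
      show toLex (_, _) = toLex (_, _)
      exact congrArg toLex (Prod.ext h1 h2)
  | @rel n l R ts =>
    match l, R with
    | 0, R => exact Empty.elim R
    | 1, R => exact Empty.elim R
    | 2, R =>
      refine ⟨[(BoundedFormula.rel R ts, ⊤),
               (BoundedFormula.equal (ts 0) (ts 1), BoundedFormula.rel R ts)], ?_⟩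
      intro A B _ _ _ _ vA vB xA xB
      have e : (Sum.elim (fun i => toLex (vA i, vB i)) (fun i => toLex (xA i, xB i)) :
          _ → A ×ₗ B) = fun j => toLex (Sum.elim vA xA j, Sum.elim vB xB j) := by
        funext j; cases j <;> rfl
      show (Term.realize _ (ts 0) < Term.realize _ (ts 1)) ↔ _
      rw [e, term_lex, term_lex, Prod.Lex.lt_iff]
      constructor
      · rintro (h | ⟨h1, h2⟩)
        · exact ⟨_, List.mem_cons_self, h, BoundedFormula.realize_top.2 trivial⟩
        · exact ⟨_, List.mem_cons_of_mem _ (List.mem_singleton_self _), h1, h2⟩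
      · rintro ⟨p, hp, h1, h2⟩
        rcases List.mem_cons.1 hp with rfl | hp'
        · exact Or.inl h1
        · rcases List.mem_singleton.1 hp' with rfl
          exact Or.inr ⟨h1, h2⟩
    | (n+3), R => exact Empty.elim R
  | imp φ ψ ihφ ihψ =>
    obtain ⟨Lφ, hφ⟩ := ihφ
    obtain ⟨Lψ, hψ⟩ := ihψ
    refine ⟨negDNF Lφ ++ Lψ, ?_⟩
    intro A B _ _ _ _ vA vB xA xB
    rw [BoundedFormula.realize_imp, hφ A B vA vB xA xB, hψ A B vA vB xA xB]
    constructor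
    · intro h
      by_cases hc : ∃ p ∈ Lφ, p.1.Realize vA xA ∧ p.2.Realize vB xB
      · obtain ⟨p, hp, h1, h2⟩ := h hc
        exact ⟨p, List.mem_append.2 (Or.inr hp), h1, h2⟩
      · obtain ⟨q, hq, h1, h2⟩ := (negDNF_spec Lφ vA vB xA xB).2 hc
        exact ⟨q, List.mem_append.2 (Or.inl hq), h1, h2⟩
    · rintro ⟨p, hp, h1, h2⟩ hφr
      rcases List.mem_append.1 hp with h | h
      · exact absurd hφr ((negDNF_spec Lφ vA vB xA xB).1 ⟨p, h, h1, h2⟩)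
      · exact ⟨p, h, h1, h2⟩
  | @all n φ ih =>
    obtain ⟨L', h'⟩ := ih
    refine ⟨negDNF ((negDNF L').map fun p => (p.1.ex, p.2.ex)), ?_⟩
    intro A B _ _ _ _ vA vB xA xB
    have key : ∀ (a : A) (b : B),
        BoundedFormula.Realize (M := A ×ₗ B) φ (fun i => toLex (vA i, vB i))
            (Fin.snoc (fun i => toLex (xA i, xB i)) (toLex (a, b))) ↔
          ∃ p ∈ L', p.1.Realize vA (Fin.snoc xA a) ∧ p.2.Realize vB (Fin.snoc xB b) := by
      intro a b
      have snoceq : (Fin.snoc (fun i => toLex (xA i, xB i)) (toLex (a, b)) :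
          Fin (n+1) → A ×ₗ B) =
          fun i : Fin (n+1) => toLex ((Fin.snoc xA a : Fin (n+1) → A) i, (Fin.snoc xB b : Fin (n+1) → B) i) := by
        funext i
        refine Fin.lastCases ?_ ?_ i
        · simp
        · intro j; simp
      rw [snoceq]
      exact h' A B vA vB (Fin.snoc xA a) (Fin.snoc xB b)
    rw [BoundedFormula.realize_all, negDNF_spec]
    have hMiff : (∃ p ∈ (negDNF L').map (fun p => (p.1.ex, p.2.ex)),
        p.1.Realize vA xA ∧ p.2.Realize vB xB) ↔
        ∃ a b, ¬ BoundedFormula.Realize (M := A ×ₗ B) φ (fun i => toLex (vA i, vB i))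
          (Fin.snoc (fun i => toLex (xA i, xB i)) (toLex (a, b))) := by
      constructor
      · rintro ⟨p, hp, h1, h2⟩
        obtain ⟨q, hq, rfl⟩ := List.mem_map.1 hp
        obtain ⟨a, ha⟩ := BoundedFormula.realize_ex.1 h1
        obtain ⟨b, hb⟩ := BoundedFormula.realize_ex.1 h2
        exact ⟨a, b, fun hr =>
          (negDNF_spec L' vA vB (Fin.snoc xA a) (Fin.snoc xB b)).1 ⟨q, hq, ha, hb⟩
            ((key a b).1 hr)⟩
      · rintro ⟨a, b, hab⟩
        obtain ⟨q, hq, h1, h2⟩ :=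
          (negDNF_spec L' vA vB (Fin.snoc xA a) (Fin.snoc xB b)).2
            (fun hc => hab ((key a b).2 hc))
        exact ⟨(q.1.ex, q.2.ex), List.mem_map.2 ⟨q, hq, rfl⟩,
          BoundedFormula.realize_ex.2 ⟨a, h1⟩, BoundedFormula.realize_ex.2 ⟨b, h2⟩⟩
    rw [hMiff]
    constructor
    · rintro h ⟨a, b, hn⟩
      exact hn (h _)
    · intro h x
      by_contra hn
      exact h ⟨(ofLex x).1, (ofLex x).2, hn⟩

/-- The constant term `0` of `oagLang`. -/
def zeroTerm {α : Type*} : oagLang.Term α :=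
  Term.func (l := 0) (Unit.unit : oagFunctions 0) Fin.elim0

lemma realize_zero_iff_sentence {M : Type u} [AddCommGroup M] [LinearOrder M] {α : Type*}
    (ψ : oagLang.Formula α) :
    ψ.Realize (fun _ => (0 : M)) ↔ M ⊨ (ψ.subst (fun _ : α => (zeroTerm : oagLang.Term Empty))) := by
  have : Sentence.Realize M (ψ.subst (fun _ : α => (zeroTerm : oagLang.Term Empty))) ↔
      ψ.Realize (fun a => Term.realize (default : Empty → M) (zeroTerm : oagLang.Term Empty)) := by
    exact BoundedFormula.realize_subst
  rw [this]
  constructor <;> intro h <;> convert h using 2 <;> rfl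

lemma empty_realize_iff_sentence {M : Type u} [AddCommGroup M] [LinearOrder M]
    (σ : oagLang.Formula Empty) (v : Empty → M) :
    σ.Realize v ↔ M ⊨ σ := by
  rw [show v = (default : Empty → M) from funext fun e => e.elim]
  rfl

lemma key_decomp {α : Type*} (φ : oagLang.Formula α)
    (L : List (oagLang.Formula α × oagLang.Formula α))
    (hL : ∀ (A B : Type u) [AddCommGroup A] [LinearOrder A] [AddCommGroup B] [LinearOrder B]
        (vA : α → A) (vB : α → B) (xA : Fin 0 → A) (xB : Fin 0 → B),
        (BoundedFormula.Realize (M := A ×ₗ B) φ (fun i => toLex (vA i, vB i))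
            (fun i => toLex (xA i, xB i)) ↔
          ∃ p ∈ L, BoundedFormula.Realize p.1 vA xA ∧ BoundedFormula.Realize p.2 vB xB))
    (G B : Type u) [AddCommGroup G] [LinearOrder G] [AddCommGroup B] [LinearOrder B]
    (vA : α → G) (vB : α → B) :
    Formula.Realize (M := G ×ₗ B) φ (fun i => toLex (vA i, vB i)) ↔
      ∃ p ∈ L, Formula.Realize p.1 vA ∧ Formula.Realize p.2 vB := by
  have := hL G B vA vB default default
  rw [show (fun i : Fin 0 => toLex ((default : Fin 0 → G) i, (default : Fin 0 → B) i)) =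
    (default : Fin 0 → G ×ₗ B) from funext fun i => i.elim0] at this
  exact this

/-- Augmentability by infinitesimals only depends on the elementary equivalence class of the
augment: if `G ⪯ G ⊕ H` (resp. `G ≡ G ⊕ H`) and `H' ≡ H`, then `G ⪯ G ⊕ H'`
(resp. `G ≡ G ⊕ H'`). -/
theorem stmt11 (G H H' : Type u) [AddCommGroup G] [LinearOrder G]
    [AddCommGroup H] [LinearOrder H] [Nontrivial H] [AddCommGroup H'] [LinearOrder H']
    (hHH' : H' ≅[oagLang] H) :
    (IsElemInclusion oagLang G (G ×ₗ H) (fun g => toLex (g, (0 : H))) →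
      IsElemInclusion oagLang G (G ×ₗ H') (fun g => toLex (g, (0 : H')))) ∧
    ((G ≅[oagLang] (G ×ₗ H)) → (G ≅[oagLang] (G ×ₗ H'))) := by
  have zt : ∀ (n : ℕ) (p : oagLang.Formula (Fin n)),
      Formula.Realize p (fun _ : Fin n => (0 : H')) ↔
        Formula.Realize p (fun _ : Fin n => (0 : H)) := by
    intro n p
    rw [realize_zero_iff_sentence, realize_zero_iff_sentence]
    exact hHH'.realize_sentence _
  constructor
  · intro h n φ v
    obtain ⟨L, hL⟩ := main_decomp (k := 0) φ
    have k1 : Formula.Realize (M := G ×ₗ H') φ (fun i => toLex (v i, (0 : H'))) ↔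
        ∃ p ∈ L, Formula.Realize p.1 v ∧ Formula.Realize p.2 (fun _ : Fin n => (0 : H')) :=
      key_decomp φ L hL G H' v (fun _ => 0)
    have k2 : Formula.Realize (M := G ×ₗ H) φ (fun i => toLex (v i, (0 : H))) ↔
        ∃ p ∈ L, Formula.Realize p.1 v ∧ Formula.Realize p.2 (fun _ : Fin n => (0 : H)) :=
      key_decomp φ L hL G H v (fun _ => 0)
    have e : (∃ p ∈ L, Formula.Realize p.1 v ∧ Formula.Realize p.2 (fun _ : Fin n => (0 : H'))) ↔
        ∃ p ∈ L, Formula.Realize p.1 v ∧ Formula.Realize p.2 (fun _ : Fin n => (0 : H)) := by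
      apply exists_congr; intro p
      rw [zt n p.2]
    calc Formula.Realize (M := G ×ₗ H') φ ((fun g => toLex (g, (0 : H'))) ∘ v)
        ↔ ∃ p ∈ L, Formula.Realize p.1 v ∧ Formula.Realize p.2 (fun _ : Fin n => (0 : H')) := k1
      _ ↔ ∃ p ∈ L, Formula.Realize p.1 v ∧ Formula.Realize p.2 (fun _ : Fin n => (0 : H)) := e
      _ ↔ Formula.Realize (M := G ×ₗ H) φ ((fun g => toLex (g, (0 : H))) ∘ v) := k2.symm
      _ ↔ Formula.Realize φ v := h n φ v
  · intro hGH
    have equiv : (G ×ₗ H') ≅[oagLang] (G ×ₗ H) := by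
      rw [elementarilyEquivalent_iff]
      intro σ
      obtain ⟨L, hL⟩ := main_decomp (k := 0) (α := Empty) σ
      have k1 := key_decomp σ L hL G H' (fun e => e.elim) (fun e => e.elim)
      have k2 := key_decomp σ L hL G H (fun e => e.elim) (fun e => e.elim)
      rw [empty_realize_iff_sentence] at k1 k2
      rw [k1, k2]
      apply exists_congr; intro p
      simp only [empty_realize_iff_sentence]
      rw [hHH'.realize_sentence p.2]
    exact hGH.trans equiv.symm
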